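/- Let 0 ≤ r₀ ≤ r with r > 0, let β ∈ [0, π/6], and set r_β = r₀ + (r − r₀)e^{iβ} ∈ ℂ. Then: (i) |r_β| ≤ r; (ii) 0 ≤ arg(r_β) ≤ β; (iii) Re(1/r_β²) ≥ cos(2β)/r² ≥ 1/(2r²). In particular r_β ≠ 0. -/

import Mathlib

set_option maxHeartbeats 1000000


open Real

/-- Elementary estimates on the exterior dilation `r_β = r₀ + (r - r₀) e^{iβ}` of a real
point `r` about `r₀` by an angle `β ∈ [0, π/6]`:
(i) `|r_β| ≤ r`; (ii) `0 ≤ arg r_β ≤ β`; (iii) `Re (1/r_β²) ≥ cos (2β)/r² ≥ 1/(2r²)`;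
in particular `r_β ≠ 0`. -/
theorem exterior_dilation_elementary (r r₀ β : ℝ) (hr₀ : 0 ≤ r₀) (hr₀r : r₀ ≤ r)
    (hr : 0 < r) (hβ : β ∈ Set.Icc 0 (π / 6)) :
    ((r₀ : ℂ) + ((r : ℂ) - (r₀ : ℂ)) * Complex.exp (Complex.I * (β : ℂ))) ≠ 0 ∧
    ‖(r₀ : ℂ) + ((r : ℂ) - (r₀ : ℂ)) * Complex.exp (Complex.I * (β : ℂ))‖ ≤ r ∧
    0 ≤ Complex.arg ((r₀ : ℂ) + ((r : ℂ) - (r₀ : ℂ)) * Complex.exp (Complex.I * (β : ℂ))) ∧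
    Complex.arg ((r₀ : ℂ) + ((r : ℂ) - (r₀ : ℂ)) * Complex.exp (Complex.I * (β : ℂ))) ≤ β ∧
    Real.cos (2 * β) / r ^ 2 ≤
      (1 / ((r₀ : ℂ) + ((r : ℂ) - (r₀ : ℂ)) * Complex.exp (Complex.I * (β : ℂ))) ^ 2).re ∧
    1 / (2 * r ^ 2) ≤ Real.cos (2 * β) / r ^ 2 := by
  obtain ⟨hβ0, hβ6⟩ := hβ
  have hπ : (0:ℝ) < π := Real.pi_pos
  have hβ2 : β < π / 2 := lt_of_le_of_lt hβ6 (by linarith)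
  set z : ℂ := (r₀ : ℂ) + ((r : ℂ) - (r₀ : ℂ)) * Complex.exp (Complex.I * (β : ℂ)) with hzdef
  set s : ℝ := r - r₀ with hsdef
  have hs : 0 ≤ s := by simp [hsdef]; linarith
  -- real and imaginary parts
  have hre : z.re = r₀ + s * Real.cos β := by
    simp [hzdef, mul_comm Complex.I (β:ℂ), Complex.exp_mul_I, Complex.add_re, Complex.mul_re,
      Complex.sub_re, Complex.sub_im, Complex.cos_ofReal_re, hsdef]
  have him : z.im = s * Real.sin β := by
    simp [hzdef, mul_comm Complex.I (β:ℂ), Complex.exp_mul_I, Complex.add_im, Complex.mul_im,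
      Complex.sub_re, Complex.sub_im, Complex.sin_ofReal_re, Complex.cos_ofReal_im, hsdef]
  have hcosβ : 0 < Real.cos β := Real.cos_pos_of_mem_Ioo ⟨by linarith, hβ2⟩
  have hsinβ : 0 ≤ Real.sin β := Real.sin_nonneg_of_nonneg_of_le_pi hβ0 (by linarith)
  have hcos1 : Real.cos β ≤ 1 := Real.cos_le_one β
  have hsin1 : Real.sin β ≤ 1 := Real.sin_le_one β
  have ha : 0 < z.re := by rw [hre]; nlinarith
  have hb : 0 ≤ z.im := by rw [him]; positivity
  have hz0 : z ≠ 0 := fun h => by simp [h] at ha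
  -- |z|² = r₀² + 2 r₀ s cos β + s²
  have hnormsq : Complex.normSq z = r₀^2 + 2*r₀*s*Real.cos β + s^2 := by
    rw [Complex.normSq_apply, hre, him]
    have := Real.sin_sq_add_cos_sq β
    nlinarith
  have habs_le : ‖z‖ ≤ r := by
    have h1 : ‖z‖ ≤ ‖((r₀:ℂ))‖ + ‖(((r:ℂ)-(r₀:ℂ)) * Complex.exp (Complex.I * (β:ℂ)))‖ := by
      rw [hzdef]; exact norm_add_le _ _
    have h2 : ‖((Complex.I * (β:ℂ)).exp)‖ = 1 := by
      rw [mul_comm, Complex.norm_exp_ofReal_mul_I]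
    have h3 : ‖((r:ℂ)-(r₀:ℂ))‖ = s := by
      rw [← Complex.ofReal_sub, Complex.norm_real, Real.norm_eq_abs, abs_of_nonneg hs]
    calc ‖z‖ ≤ _ := h1
      _ = r₀ + s := by rw [norm_mul, h2, h3, Complex.norm_real, Real.norm_eq_abs, abs_of_nonneg hr₀, mul_one]
      _ = r := by simp [hsdef]
  have hsq_le : Complex.normSq z ≤ r^2 := by
    rw [← Complex.sq_norm]
    have := norm_nonneg z
    nlinarith
  have hsq_pos : 0 < Complex.normSq z := Complex.normSq_pos.2 hz0
  -- s ≤ |z|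
  have hs_le : s ≤ ‖z‖ := by
    rw [← Real.sqrt_sq hs, Complex.norm_def]
    apply Real.sqrt_le_sqrt
    rw [hnormsq]; nlinarith [mul_nonneg (mul_nonneg hr₀ hs) hcosβ.le]
  -- arg bounds
  have harg0 : 0 ≤ z.arg := Complex.arg_nonneg_iff.2 hb
  have hargβ : z.arg ≤ β := by
    rw [Complex.arg_of_re_nonneg ha.le]
    apply (Real.arcsin_le_iff_le_sin ?_ ⟨by linarith, by linarith⟩).2
    · rw [him]
      rw [div_le_iff₀ (norm_pos_iff.mpr hz0)]
      calc s * Real.sin β ≤ ‖z‖ * Real.sin β := by nlinarith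
        _ = Real.sin β * ‖z‖ := by ring
    · constructor
      · have : -(1:ℝ) ≤ 0 := by norm_num
        refine this.trans ?_
        apply div_nonneg hb (norm_nonneg z)
      · rw [div_le_one (norm_pos_iff.mpr hz0)]
        exact (Complex.abs_im_le_norm z).trans_eq' (abs_of_nonneg hb)
  -- Re(1/z²)
  have hre2 : (1 / z ^ 2).re = (z.re^2 - z.im^2) / (Complex.normSq z)^2 := by
    have h1 : Complex.normSq (z^2) = (Complex.normSq z)^2 := by
      exact map_pow Complex.normSq z 2
    have h2 : (z^2).re = z.re^2 - z.im^2 := by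
      rw [sq, Complex.mul_re]; ring
    rw [one_div, Complex.inv_re, h1, h2]
  have hc2 : Real.cos (2*β) = Real.cos β ^2 - Real.sin β ^2 := by
    rw [Real.cos_two_mul]
    have := Real.sin_sq_add_cos_sq β
    linarith
  have hkey : Real.cos (2*β) / r^2 ≤ (z.re^2 - z.im^2) / (Complex.normSq z)^2 := by
    have h1 : Real.cos (2*β) * Complex.normSq z ≤ z.re^2 - z.im^2 := by
      rw [hc2, Complex.normSq_apply, hre, him]
      have hab : z.im * Real.cos β ≤ z.re * Real.sin β := by
        rw [hre, him]; nlinarith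
      rw [hre, him] at hab
      have hpyth := Real.sin_sq_add_cos_sq β
      have h2 : 0 ≤ ((r₀ + s*Real.cos β) * Real.sin β - s * Real.sin β * Real.cos β) *
          ((r₀ + s*Real.cos β) * Real.sin β + s * Real.sin β * Real.cos β) := by
        apply mul_nonneg (by linarith)
        have : 0 ≤ (r₀ + s*Real.cos β) * Real.sin β := by positivity
        nlinarith [mul_nonneg (mul_nonneg hs hsinβ) hcosβ.le]
      nlinarith [h2, hpyth, sq_nonneg (r₀ + s*Real.cos β), sq_nonneg (s * Real.sin β)]
    have hc2pos : (0:ℝ) ≤ Real.cos (2*β) := by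
      have : Real.cos (2*β) ≥ 0 := by
        apply Real.cos_nonneg_of_mem_Icc
        constructor <;> [linarith; linarith]
      linarith
    rw [div_le_div_iff₀ (by positivity) (by positivity)]
    have hnn : 0 ≤ z.re^2 - z.im^2 := le_trans (mul_nonneg hc2pos hsq_pos.le) h1
    calc Real.cos (2*β) * Complex.normSq z ^2 = (Real.cos (2*β) * Complex.normSq z) * Complex.normSq z := by ring
      _ ≤ (z.re^2 - z.im^2) * Complex.normSq z := mul_le_mul_of_nonneg_right h1 hsq_pos.le
      _ ≤ (z.re^2 - z.im^2) * r^2 := mul_le_mul_of_nonneg_left hsq_le hnn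
  have hhalf : 1 / (2 * r^2) ≤ Real.cos (2*β) / r^2 := by
    have hc : (1:ℝ)/2 ≤ Real.cos (2*β) := by
      have := Real.cos_le_cos_of_nonneg_of_le_pi (by linarith : (0:ℝ) ≤ 2*β) (by linarith : π/3 ≤ π) (by linarith : 2*β ≤ π/3)
      rw [show π/3 = π/3 from rfl] at this
      have h3 : Real.cos (π/3) = 1/2 := Real.cos_pi_div_three
      linarith
    rw [div_le_div_iff₀ (by positivity) (by positivity)]
    nlinarith
  exact ⟨hz0, habs_le, harg0, hargβ, by rw [hre2]; exact hkey, hhalf⟩
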